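/- Let 0 < θ < 1, p > 0 and T = θ^(2^p). Let x > 0 satisfy (1−T)·x − T·(x²+1) > 0, and suppose ξ := x + 1/x satisfies a·ξ² + b·ξ + c = 0, where a = θ·T·(1−T)² + (θ²−T)², b = (1−T)·[2(θ²−T) − θ(1−T)(1−3T)], and c = (1−T)²·[1 − 2θ(1−T)]. Define y = sqrt(((1−T)·x − T·(x²+1))/θ). Then (x, y) solves the system (E1), (E2). -/

import Mathlib

/-- Let 0 < θ < 1, p > 0, T = θ^(2^p). Let x > 0 satisfy
(1−T)·x − T·(x²+1) > 0 and suppose ξ = x + 1/x satisfies a·ξ² + b·ξ + c = 0 (with a, b, c as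
in the quadratic for the p-SOS model). Then with y = sqrt(((1−T)·x − T·(x²+1))/θ), the pair
(x, y) solves the system (E1), (E2). -/
theorem stmt_7 (θ p T x y a b c : ℝ) (hθ0 : 0 < θ) (hθ1 : θ < 1) (hp : 0 < p)
    (hT : T = θ ^ ((2 : ℝ) ^ p)) (hx : 0 < x)
    (hpos : 0 < (1 - T) * x - T * (x ^ 2 + 1))
    (ha : a = θ * T * (1 - T) ^ 2 + (θ ^ 2 - T) ^ 2)
    (hb : b = (1 - T) * (2 * (θ ^ 2 - T) - θ * (1 - T) * (1 - 3 * T)))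
    (hc : c = (1 - T) ^ 2 * (1 - 2 * θ * (1 - T)))
    (hξ : a * (x + 1 / x) ^ 2 + b * (x + 1 / x) + c = 0)
    (hy : y = Real.sqrt (((1 - T) * x - T * (x ^ 2 + 1)) / θ)) :
    x = (x ^ 2 + θ * y ^ 2 + T) / (T * x ^ 2 + θ * y ^ 2 + 1) ∧
    y = (θ * x ^ 2 + y ^ 2 + θ) / (T * x ^ 2 + θ * y ^ 2 + 1) := by
  have hT0 : 0 < T := hT ▸ Real.rpow_pos_of_pos hθ0 _
  have hT1 : T < 1 := by
    rw [hT]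
    exact Real.rpow_lt_one hθ0.le hθ1 (Real.rpow_pos_of_pos (by norm_num) p)
  have hxne : x ≠ 0 := hx.ne'
  set Q : ℝ := (1 - T) * x - T * (x ^ 2 + 1) with hQ
  have hQθ : 0 ≤ Q / θ := le_of_lt (div_pos hpos hθ0)
  have hy2 : y ^ 2 = Q / θ := by rw [hy, Real.sq_sqrt hQθ]
  have hy2' : θ * y ^ 2 = Q := by rw [hy2]; field_simp
  have hy0 : 0 < y := by
    rw [hy]; exact Real.sqrt_pos.mpr (div_pos hpos hθ0)
  -- denominator
  have hD : T * x ^ 2 + θ * y ^ 2 + 1 = (1 - T) * (x + 1) := by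
    rw [hy2']; ring
  have hDpos : 0 < (1 - T) * (x + 1) := mul_pos (sub_pos.mpr hT1) (by linarith)
  have hDpos' : 0 < T * x ^ 2 + θ * y ^ 2 + 1 := by rw [hD]; exact hDpos
  constructor
  · rw [eq_div_iff hDpos'.ne', hD, hy2']
    have hQd : Q = (1 - T) * x - T * (x ^ 2 + 1) := rfl
    nlinarith [hQd]
  · -- E2
    have h2 : a * (x ^ 2 + 1) ^ 2 + b * (x * (x ^ 2 + 1)) + c * x ^ 2 = 0 := by
      field_simp at hξ
      have hmul : x * (a * (x ^ 2 + 1) ^ 2 + b * (x * (x ^ 2 + 1)) + c * x ^ 2) = 0 := by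
        linear_combination x * hξ
      rcases mul_eq_zero.mp hmul with h | h
      · exact absurd h hxne
      · exact h
    set R : ℝ := θ ^ 2 * (x ^ 2 + 1) + Q with hR
    have hRpos : 0 < R := by
      have h1 : T * (x ^ 2 + 1) < (1 - T) * x := by dsimp [Q] at hpos; linarith
      have h2' : 0 < θ ^ 2 * (x ^ 2 + 1) := by positivity
      dsimp [R, Q]; nlinarith
    have key : θ * Q * ((1 - T) * (x + 1)) ^ 2 = R ^ 2 := by
      rw [hR, hQ]
      linear_combination (-1 : ℝ) * h2 + ((x^2+1)^2) * ha + (x * (x^2+1)) * hb + x^2 * hc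
    have hsq : (y * (θ * ((1 - T) * (x + 1)))) ^ 2 = R ^ 2 := by
      have hstep : (y * (θ * ((1 - T) * (x + 1)))) ^ 2
          = θ * y ^ 2 * (θ * ((1 - T) * (x + 1)) ^ 2) := by ring
      rw [hstep, hy2']
      linear_combination key
    have heq : y * (θ * ((1 - T) * (x + 1))) = R := by
      have hfac : (y * (θ * ((1 - T) * (x + 1))) - R) * (y * (θ * ((1 - T) * (x + 1))) + R) = 0 := by
        linear_combination hsq
      rcases mul_eq_zero.mp hfac with h | h
      · linarith [sub_eq_zero.mp h]
      · have h1 : 0 < y * (θ * ((1 - T) * (x + 1))) := by positivity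
        linarith
    rw [eq_div_iff hDpos'.ne', hD]
    have hθne : θ ≠ 0 := hθ0.ne'
    have hkey2 : θ * (y * ((1 - T) * (x + 1))) = θ * (θ * x ^ 2 + y ^ 2 + θ) := by
      have hrhs : θ * (θ * x ^ 2 + y ^ 2 + θ) = θ ^ 2 * (x ^ 2 + 1) + θ * y ^ 2 := by ring
      rw [hrhs, hy2']
      rw [hR] at heq
      linarith [heq]
    have := mul_left_cancel₀ hθne hkey2
    linarith [this]
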